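/- Let Y₁,…,Yₙ be i.i.d. random variables taking values in [a,b] with mean μ, and let U₁,…,Uₙ be i.i.d. Uniform[a,b] random variables independent of the Yᵢ. Define Δᵢ = 1_{Yᵢ ≤ Uᵢ} and the estimator μ̂ₙ = (1/n) Σᵢ (Δᵢ(2Uᵢ − b) + (1 − Δᵢ)(2Uᵢ − a)). Then E[μ̂ₙ] = μ. -/

import Mathlib

open MeasureTheory

lemma unif_int (a b : ℝ) (hab : a < b) (y : ℝ) (hy : y ∈ Set.Icc a b) :
    ∫ u, ((if y ≤ u then (1:ℝ) else 0) * (2 * u - b)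
      + (1 - if y ≤ u then (1:ℝ) else 0) * (2 * u - a))
      ∂((ENNReal.ofReal (b - a))⁻¹ • volume.restrict (Set.Icc a b)) = y := by
  have hba : (0:ℝ) < b - a := by linarith
  rw [integral_smul_measure]
  have hcongr : ∀ u : ℝ, ((if y ≤ u then (1:ℝ) else 0) * (2 * u - b)
      + (1 - if y ≤ u then (1:ℝ) else 0) * (2 * u - a))
      = (2 * u - a) + Set.indicator (Set.Ici y) (fun _ => a - b) u := by
    intro u
    by_cases h : y ≤ u <;> simp [Set.indicator, h]
  simp_rw [hcongr]
  have h1 : Integrable (fun u : ℝ => 2 * u - a) (volume.restrict (Set.Icc a b)) := by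
    exact (Continuous.integrableOn_Icc (by continuity))
  have h2 : Integrable (fun u : ℝ => Set.indicator (Set.Ici y) (fun _ => a - b) u)
      (volume.restrict (Set.Icc a b)) := by
    apply Integrable.indicator (integrable_const _) measurableSet_Ici
  rw [integral_add h1 h2]
  have e1 : ∫ u in Set.Icc a b, (2 * u - a) = (b - a) * b := by
    rw [MeasureTheory.integral_Icc_eq_integral_Ioc, ← intervalIntegral.integral_of_le hab.le]
    rw [intervalIntegral.integral_sub ((intervalIntegral.intervalIntegrable_id).const_mul 2)
      (intervalIntegrable_const), intervalIntegral.integral_const_mul,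
      integral_id, intervalIntegral.integral_const]
    rw [smul_eq_mul]; ring
  have e2 : ∫ u in Set.Icc a b, Set.indicator (Set.Ici y) (fun _ => a - b) u
      = (a - b) * (b - y) := by
    rw [integral_indicator measurableSet_Ici]
    rw [Measure.restrict_restrict measurableSet_Ici]
    have : Set.Ici y ∩ Set.Icc a b = Set.Icc y b := by
      ext u
      simp only [Set.mem_inter_iff, Set.mem_Ici, Set.mem_Icc]
      constructor
      · rintro ⟨h1, _, h3⟩; exact ⟨h1, h3⟩
      · rintro ⟨h1, h2⟩; exact ⟨h1, le_trans hy.1 h1, h2⟩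
    rw [this, setIntegral_const, measureReal_def, Real.volume_Icc, ENNReal.toReal_ofReal (by linarith [hy.2])]
    rw [smul_eq_mul]; ring
  rw [e1, e2]
  rw [ENNReal.toReal_inv, ENNReal.toReal_ofReal hba.le]
  field_simp
  rw [smul_eq_mul, div_mul_eq_mul_div, one_mul, div_eq_iff hba.ne']
  ring

lemma nu_compl (a b : ℝ) :
    ((ENNReal.ofReal (b - a))⁻¹ • volume.restrict (Set.Icc a b)) (Set.Icc a b)ᶜ = 0 := by
  rw [Measure.smul_apply, Measure.restrict_apply (measurableSet_Icc.compl)]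
  simp

lemma g_meas (a b : ℝ) : Measurable (fun p : ℝ × ℝ =>
    (if p.1 ≤ p.2 then (1:ℝ) else 0) * (2 * p.2 - b)
      + (1 - if p.1 ≤ p.2 then (1:ℝ) else 0) * (2 * p.2 - a)) := by
  have hs : MeasurableSet {p : ℝ × ℝ | p.1 ≤ p.2} :=
    measurableSet_le measurable_fst measurable_snd
  have hi : Measurable (fun p : ℝ × ℝ => if p.1 ≤ p.2 then (1:ℝ) else 0) :=
    Measurable.ite hs measurable_const measurable_const
  fun_prop

lemma g_bound (a b : ℝ) (y u : ℝ) (hu : u ∈ Set.Icc a b) :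
    ‖(if y ≤ u then (1:ℝ) else 0) * (2 * u - b)
      + (1 - if y ≤ u then (1:ℝ) else 0) * (2 * u - a)‖ ≤ 3 * (|a| + |b|) := by
  have h1 := le_abs_self a; have h2 := neg_abs_le a
  have h3 := le_abs_self b; have h4 := neg_abs_le b
  obtain ⟨hu1, hu2⟩ := hu
  by_cases h : y ≤ u <;> simp only [h, if_true, if_false] <;>
    rw [Real.norm_eq_abs, abs_le] <;> constructor <;> nlinarith

lemma per_i {Ω : Type*} [MeasurableSpace Ω] (P : Measure Ω) [IsProbabilityMeasure P]
    (a b : ℝ) (hab : a < b) (Y U : Ω → ℝ)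
    (hY : Measurable Y) (hU : Measurable U)
    (hYab : ∀ ω, Y ω ∈ Set.Icc a b)
    (hUunif : Measure.map U P = (ENNReal.ofReal (b - a))⁻¹ • volume.restrict (Set.Icc a b))
    (hindep : ProbabilityTheory.IndepFun Y U P) :
    ∫ ω, ((if Y ω ≤ U ω then (1:ℝ) else 0) * (2 * U ω - b)
        + (1 - if Y ω ≤ U ω then (1:ℝ) else 0) * (2 * U ω - a)) ∂P
      = ∫ ω, Y ω ∂P := by
  set ν : Measure ℝ := (ENNReal.ofReal (b - a))⁻¹ • volume.restrict (Set.Icc a b) with hν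
  set g : ℝ × ℝ → ℝ := fun p =>
    (if p.1 ≤ p.2 then (1:ℝ) else 0) * (2 * p.2 - b)
      + (1 - if p.1 ≤ p.2 then (1:ℝ) else 0) * (2 * p.2 - a) with hg
  have hgm : Measurable g := g_meas a b
  haveI hνp : IsProbabilityMeasure ν := by
    rw [← hUunif]; exact Measure.isProbabilityMeasure_map hU.aemeasurable
  haveI : IsProbabilityMeasure (Measure.map Y P) := Measure.isProbabilityMeasure_map hY.aemeasurable
  have hmap : Measure.map (fun ω => (Y ω, U ω)) P = (Measure.map Y P).prod ν := by
    have := (ProbabilityTheory.indepFun_iff_map_prod_eq_prod_map_map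
      hY.aemeasurable hU.aemeasurable).mp hindep
    rw [hUunif] at this
    exact this
  have hae : ∀ᵐ p ∂((Measure.map Y P).prod ν), p.2 ∈ Set.Icc a b := by
    have : ((Measure.map Y P).prod ν) {p : ℝ × ℝ | p.2 ∉ Set.Icc a b} = 0 := by
      have : {p : ℝ × ℝ | p.2 ∉ Set.Icc a b} = Set.univ ×ˢ (Set.Icc a b)ᶜ := by
        ext p; simp
      rw [this, Measure.prod_prod, nu_compl, mul_zero]
    exact this
  have hint : Integrable g ((Measure.map Y P).prod ν) := by
    refine ⟨hgm.aestronglyMeasurable, ?_⟩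
    apply MeasureTheory.HasFiniteIntegral.of_bounded (C := 3 * (|a| + |b|))
    filter_upwards [hae] with p hp
    exact g_bound a b p.1 p.2 hp
  calc ∫ ω, g (Y ω, U ω) ∂P = ∫ p, g p ∂(Measure.map (fun ω => (Y ω, U ω)) P) := by
        rw [integral_map (hY.prodMk hU).aemeasurable hgm.aestronglyMeasurable]
    _ = ∫ p, g p ∂((Measure.map Y P).prod ν) := by rw [hmap]
    _ = ∫ y, ∫ u, g (y, u) ∂ν ∂(Measure.map Y P) := integral_prod g hint
    _ = ∫ y, y ∂(Measure.map Y P) := by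
        apply integral_congr_ae
        have haeY : ∀ᵐ y ∂(Measure.map Y P), y ∈ Set.Icc a b := by
          rw [ae_iff]
          have h0 : {y : ℝ | ¬ y ∈ Set.Icc a b} = (Set.Icc a b)ᶜ := rfl
          rw [h0, Measure.map_apply hY measurableSet_Icc.compl]
          have h1 : Y ⁻¹' (Set.Icc a b)ᶜ = ∅ :=
            Set.eq_empty_iff_forall_notMem.mpr (fun ω h => h (hYab ω))
          simp [h1]
        filter_upwards [haeY] with y hy
        exact unif_int a b hab y hy
    _ = ∫ ω, Y ω ∂P := integral_map hY.aemeasurable aestronglyMeasurable_id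

/-- Unbiasedness of the interval-private mean estimator: with i.i.d. `Yᵢ ∈ [a,b]`
of mean `μ`, independent `Uᵢ ~ Uniform[a,b]`, and `Δᵢ = 1_{Yᵢ ≤ Uᵢ}`,
`E[(1/n) Σᵢ (Δᵢ(2Uᵢ-b) + (1-Δᵢ)(2Uᵢ-a))] = μ`. -/
theorem stmt_6 {Ω : Type*} [MeasurableSpace Ω] (P : Measure Ω) [IsProbabilityMeasure P]
    (a b : ℝ) (hab : a < b) (n : ℕ) (hn : 0 < n)
    (Y U : Fin n → Ω → ℝ)
    (hY : ∀ i, Measurable (Y i)) (hU : ∀ i, Measurable (U i))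
    (hYab : ∀ i ω, Y i ω ∈ Set.Icc a b)
    (hiid : ∀ i j : Fin n, ProbabilityTheory.IdentDistrib (Y i) (Y j) P P)
    (hUunif : ∀ i, Measure.map (U i) P
      = (ENNReal.ofReal (b - a))⁻¹ • volume.restrict (Set.Icc a b))
    (hindep : ∀ i, ProbabilityTheory.IndepFun (Y i) (U i) P)
    (μ : ℝ) (hμ : ∀ i, ∫ ω, Y i ω ∂P = μ) :
    ∫ ω, (1 / (n:ℝ)) * ∑ i,
        ((if Y i ω ≤ U i ω then (1:ℝ) else 0) * (2 * U i ω - b)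
          + (1 - if Y i ω ≤ U i ω then (1:ℝ) else 0) * (2 * U i ω - a)) ∂P = μ := by
  have hUe : ∀ i : Fin n, ∀ᵐ ω ∂P, U i ω ∈ Set.Icc a b := by
    intro i
    rw [ae_iff]
    have h0 : {ω | ¬ U i ω ∈ Set.Icc a b} = U i ⁻¹' (Set.Icc a b)ᶜ := rfl
    rw [h0, ← Measure.map_apply (hU i) measurableSet_Icc.compl, hUunif i, nu_compl]
  have hintg : ∀ i : Fin n, Integrable (fun ω =>
      (if Y i ω ≤ U i ω then (1:ℝ) else 0) * (2 * U i ω - b)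
        + (1 - if Y i ω ≤ U i ω then (1:ℝ) else 0) * (2 * U i ω - a)) P := by
    intro i
    have hm : Measurable (fun ω =>
        (if Y i ω ≤ U i ω then (1:ℝ) else 0) * (2 * U i ω - b)
          + (1 - if Y i ω ≤ U i ω then (1:ℝ) else 0) * (2 * U i ω - a)) :=
      (g_meas a b).comp ((hY i).prodMk (hU i))
    refine ⟨hm.aestronglyMeasurable, ?_⟩
    apply MeasureTheory.HasFiniteIntegral.of_bounded (C := 3 * (|a| + |b|))
    filter_upwards [hUe i] with ω hω
    exact g_bound a b (Y i ω) (U i ω) hω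
  have hsum : ∫ ω, (1 / (n:ℝ)) * ∑ i,
        ((if Y i ω ≤ U i ω then (1:ℝ) else 0) * (2 * U i ω - b)
          + (1 - if Y i ω ≤ U i ω then (1:ℝ) else 0) * (2 * U i ω - a)) ∂P
      = (1 / (n:ℝ)) * ∑ i, ∫ ω,
        ((if Y i ω ≤ U i ω then (1:ℝ) else 0) * (2 * U i ω - b)
          + (1 - if Y i ω ≤ U i ω then (1:ℝ) else 0) * (2 * U i ω - a)) ∂P := by
    rw [MeasureTheory.integral_const_mul, integral_finset_sum _ (fun i _ => hintg i)]
  rw [hsum]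
  have heach : ∀ i : Fin n, ∫ ω,
      ((if Y i ω ≤ U i ω then (1:ℝ) else 0) * (2 * U i ω - b)
        + (1 - if Y i ω ≤ U i ω then (1:ℝ) else 0) * (2 * U i ω - a)) ∂P = μ := by
    intro i
    rw [per_i P a b hab (Y i) (U i) (hY i) (hU i) (hYab i) (hUunif i) (hindep i)]
    exact hμ i
  simp only [heach]
  rw [Finset.sum_const, Finset.card_univ, Fintype.card_fin, nsmul_eq_mul]
  field_simp
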